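/- Under the same abstract assumptions (ℓ_{1:T} − r_{1:T} ≤ Σ_t ε_t ℓ_t, r_{1:T} ≤ s_{1:T}^i + k^i/ε_T, ℓ_t ≤ 1), if ε_t = √(K/L) with L ≥ ℓ_{1:T} and k^i ≤ K for all i, then ℓ_{1:T} ≤ s_{1:T}^i + 2√(LK) for all i. -/

import Mathlib

/-- FPL bound for static learning rate ε_t = √(K/L), uniform complexity bound K. -/
theorem fpl_static_uniform_bound {ι : Type*} (T : ℕ) (hT : 1 ≤ T)
    (ℓ r ε : ℕ → ℝ) (s k : ι → ℝ) (L K : ℝ) (hL : 0 < L) (hK : 0 < K)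
    (hε : ∀ t, ε t = Real.sqrt (K / L))
    (hℓ : ∀ t, 0 ≤ ℓ t) (hℓ1 : ∀ t, ℓ t ≤ 1)
    (hk : ∀ i, 0 ≤ k i) (hkK : ∀ i, k i ≤ K)
    (hloss : ∑ t ∈ Finset.Icc 1 T, ℓ t ≤ L)
    (hlr : ∑ t ∈ Finset.Icc 1 T, ℓ t - ∑ t ∈ Finset.Icc 1 T, r t ≤
      ∑ t ∈ Finset.Icc 1 T, ε t * ℓ t)
    (hr : ∀ i, ∑ t ∈ Finset.Icc 1 T, r t ≤ s i + k i / ε T) :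
    ∀ i, ∑ t ∈ Finset.Icc 1 T, ℓ t ≤ s i + 2 * Real.sqrt (L * K) := by
  intro i
  have hsq : (0:ℝ) < Real.sqrt (K / L) := Real.sqrt_pos.mpr (div_pos hK hL)
  have h1 : ∑ t ∈ Finset.Icc 1 T, ε t * ℓ t = Real.sqrt (K / L) * ∑ t ∈ Finset.Icc 1 T, ℓ t := by
    rw [Finset.mul_sum]
    exact Finset.sum_congr rfl fun t _ => by rw [hε t]
  have hεL : Real.sqrt (K / L) * ∑ t ∈ Finset.Icc 1 T, ℓ t ≤ Real.sqrt (L * K) := by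
    have h2 : Real.sqrt (K / L) * ∑ t ∈ Finset.Icc 1 T, ℓ t ≤ Real.sqrt (K / L) * L :=
      mul_le_mul_of_nonneg_left hloss hsq.le
    have h3 : Real.sqrt (K / L) * L = Real.sqrt (L * K) := by
      rw [← Real.sqrt_sq hL.le, ← Real.sqrt_mul (by positivity)]
      congr 1
      field_simp
      rw [Real.sq_sqrt (sq_nonneg L)]
    linarith
  have hkε : k i / ε T ≤ Real.sqrt (L * K) := by
    rw [hε T]
    have h5 : K / Real.sqrt (K / L) = Real.sqrt (L * K) := by
      rw [eq_comm, eq_div_iff hsq.ne', ← Real.sqrt_mul (by positivity),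
        show L * K * (K / L) = K ^ 2 by field_simp, Real.sqrt_sq hK.le]
    rw [← h5]
    gcongr
    exact hkK i
  have := hr i
  have := hlr
  rw [h1] at hlr
  linarith
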